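/- arXiv:1801.03494 — 2 statements merged into one kernel-verified Lean document; each statement's English description precedes it below -/
import Mathlib

section
/- Let T(n) = R·n^N + (n+1)^N, T₂(n) = ⌈(R·T(n) + (K−1)(n+1)^N)/(K−1)⌉, T₁(n) = T(n) − T₂(n), and block length B(n) = R·T(n) + K(n+1)^N. Then lim_{n→∞} K·T₁(n)/B(n) = K·R·(K−R−2)/((K−1)(R(R+1)+K)). -/
open Filter

/-- With `T(n) = R·n^N + (n+1)^N`, `T₂(n) = ⌈(R·T(n) + (K−1)(n+1)^N)/(K−1)⌉`,
`T₁(n) = T(n) − T₂(n)` and block length `B(n) = R·T(n) + K·(n+1)^N`, we have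
`lim_{n→∞} K·T₁(n)/B(n) = K·R·(K−R−2)/((K−1)(R(R+1)+K))`. -/
theorem sdof_cm_limit (K R N : ℕ) (hK : 3 ≤ K) (hR : 1 ≤ R) (hN : 1 ≤ N)
    (hKR : R + 2 < K) :
    Tendsto
      (fun n : ℕ =>
        let T : ℝ := R * (n : ℝ) ^ N + ((n : ℝ) + 1) ^ N
        let T₂ : ℝ := (⌈((R : ℝ) * T + ((K : ℝ) - 1) * ((n : ℝ) + 1) ^ N) / ((K : ℝ) - 1)⌉ : ℤ)
        let T₁ : ℝ := T - T₂
        let B : ℝ := (R : ℝ) * T + (K : ℝ) * ((n : ℝ) + 1) ^ N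
        (K : ℝ) * T₁ / B)
      atTop
      (nhds ((K : ℝ) * R * ((K : ℝ) - R - 2) /
        (((K : ℝ) - 1) * ((R : ℝ) * (R + 1) + K)))) := by
  have hK3 : (3:ℝ) ≤ (K:ℝ) := by exact_mod_cast hK
  have hR1 : (1:ℝ) ≤ (R:ℝ) := by exact_mod_cast hR
  have hKne : (K:ℝ) - 1 ≠ 0 := by linarith
  have hDenpos : (0:ℝ) < (R:ℝ) * ((R:ℝ)+1) + (K:ℝ) * 1 := by nlinarith
  set Tf : ℕ → ℝ := fun n => (R:ℝ) * (n : ℝ) ^ N + ((n : ℝ) + 1) ^ N with hTf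
  set x : ℕ → ℝ := fun n =>
    ((R : ℝ) * Tf n + ((K : ℝ) - 1) * ((n : ℝ) + 1) ^ N) / ((K : ℝ) - 1) with hx
  set e : ℕ → ℝ := fun n => (⌈x n⌉ : ℝ) - x n with he
  set u : ℕ → ℝ := fun n => ((n : ℝ) + 1) ^ N / (n : ℝ) ^ N with huu
  -- u → 1
  have hu : Tendsto u atTop (nhds 1) := by
    have h0 : Tendsto (fun n : ℕ => 1 + 1 / (n:ℝ)) atTop (nhds 1) := by
      simpa using tendsto_const_nhds.add (tendsto_one_div_atTop_nhds_zero_nat : Tendsto (fun n : ℕ => 1 / (n:ℝ)) atTop (nhds 0))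
    have h1 : Tendsto (fun n : ℕ => ((n:ℝ) + 1) / (n:ℝ)) atTop (nhds 1) := by
      apply h0.congr'
      filter_upwards [eventually_gt_atTop 0] with n hn
      have hne : (n:ℝ) ≠ 0 := by positivity
      field_simp
    have h2 := h1.pow N
    simpa [huu, div_pow] using h2
  -- 1/n^N → 0
  have hpow : Tendsto (fun n : ℕ => (n:ℝ) ^ N) atTop atTop :=
    (tendsto_pow_atTop (by omega : N ≠ 0)).comp tendsto_natCast_atTop_atTop
  have hinv : Tendsto (fun n : ℕ => 1 / (n:ℝ) ^ N) atTop (nhds 0) := by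
    simpa [one_div, Pi.inv_def] using hpow.inv_tendsto_atTop
  -- e n ∈ [0,1)
  have he0 : ∀ n, 0 ≤ e n := fun n => sub_nonneg.2 (Int.le_ceil _)
  have he1 : ∀ n, e n ≤ 1 := fun n => by
    have := Int.ceil_lt_add_one (x n)
    simp only [he]
    linarith
  have hE : Tendsto (fun n : ℕ => e n / (n:ℝ) ^ N) atTop (nhds 0) := by
    apply squeeze_zero' (g := fun n : ℕ => 1 / (n:ℝ) ^ N)
    · filter_upwards [eventually_gt_atTop 0] with n hn
      have : (0:ℝ) < (n:ℝ) ^ N := by positivity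
      exact div_nonneg (he0 n) this.le
    · filter_upwards [eventually_gt_atTop 0] with n hn
      have hp : (0:ℝ) < (n:ℝ) ^ N := by positivity
      gcongr
      exact he1 n
    · exact hinv
  -- the limit value rewritten
  have hLeq : (K : ℝ) * R * ((K : ℝ) - R - 2) /
      (((K : ℝ) - 1) * ((R : ℝ) * (R + 1) + K)) =
      (K:ℝ) * ((((K:ℝ) - 1 - R) / ((K:ℝ) - 1)) * ((R:ℝ) + 1) - 1 - 0) /
        ((R:ℝ) * ((R:ℝ) + 1) + (K:ℝ) * 1) := by
    field_simp
    ring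
  rw [hLeq]
  -- the auxiliary function g
  have hg : Tendsto (fun n : ℕ =>
      (K:ℝ) * ((((K:ℝ) - 1 - R) / ((K:ℝ) - 1)) * ((R:ℝ) + u n) - u n - e n / (n:ℝ) ^ N) /
        ((R:ℝ) * ((R:ℝ) + u n) + (K:ℝ) * u n)) atTop
      (nhds ((K:ℝ) * ((((K:ℝ) - 1 - R) / ((K:ℝ) - 1)) * ((R:ℝ) + 1) - 1 - 0) /
        ((R:ℝ) * ((R:ℝ) + 1) + (K:ℝ) * 1))) := by
    apply Tendsto.div
    · exact tendsto_const_nhds.mul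
        (((tendsto_const_nhds.mul (tendsto_const_nhds.add hu)).sub hu).sub hE)
    · exact (tendsto_const_nhds.mul (tendsto_const_nhds.add hu)).add
        (tendsto_const_nhds.mul hu)
    · exact ne_of_gt hDenpos
  apply hg.congr'
  filter_upwards [eventually_gt_atTop 0] with n hn
  have hnpos : (0:ℝ) < (n:ℝ) := by exact_mod_cast hn
  have hnp : (0:ℝ) < (n:ℝ) ^ N := by positivity
  have hupos : (0:ℝ) < u n := by
    simp only [huu]; positivity
  have hBpos : (0:ℝ) < (R:ℝ) * Tf n + (K:ℝ) * ((n:ℝ) + 1) ^ N := by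
    have h1 : (0:ℝ) < ((n:ℝ) + 1) ^ N := by positivity
    have h2 : (0:ℝ) ≤ (R:ℝ) * Tf n := by
      have : (0:ℝ) ≤ Tf n := by simp only [hTf]; positivity
      exact mul_nonneg (by positivity) this
    nlinarith
  have hgden : (0:ℝ) < (R:ℝ) * ((R:ℝ) + u n) + (K:ℝ) * u n := by nlinarith
  -- key identity
  have hceil : (⌈x n⌉ : ℝ) = x n + e n := by simp [he]
  show (K:ℝ) * ((((K:ℝ) - 1 - R) / ((K:ℝ) - 1)) * ((R:ℝ) + u n) - u n - e n / (n:ℝ) ^ N) /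
        ((R:ℝ) * ((R:ℝ) + u n) + (K:ℝ) * u n)
      = (K : ℝ) * (Tf n - (⌈x n⌉ : ℤ)) / ((R:ℝ) * Tf n + (K:ℝ) * ((n:ℝ) + 1) ^ N)
  rw [hceil, hx]
  simp only [huu, hTf]
  field_simp
  ring
end

section
/- Let T(n) = R·n^N + (n+1)^N, T₂(n) = ⌈(R·T(n) + K(n+1)^N)/K⌉, T₁(n) = T(n) − T₂(n), and B(n) = R·T(n) + K(n+1)^N. Then lim_{n→∞} K·T₁(n)/B(n) = R(K−R−1)/(R(R+1)+K). -/
open Filter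

/-- With `T(n) = R·n^N + (n+1)^N`, `T₂(n) = ⌈(R·T(n) + K(n+1)^N)/K⌉`,
`T₁(n) = T(n) − T₂(n)` and `B(n) = R·T(n) + K·(n+1)^N`, we have
`lim_{n→∞} K·T₁(n)/B(n) = R(K−R−1)/(R(R+1)+K)`. -/
theorem sdof_ee_limit (K R N : ℕ) (hK : 2 ≤ K) (hR : 1 ≤ R) (hN : 1 ≤ N)
    (hKR : R + 1 < K) :
    Tendsto
      (fun n : ℕ =>
        let T : ℝ := R * (n : ℝ) ^ N + ((n : ℝ) + 1) ^ N
        let T₂ : ℝ := (⌈((R : ℝ) * T + (K : ℝ) * ((n : ℝ) + 1) ^ N) / (K : ℝ)⌉ : ℤ)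
        let T₁ : ℝ := T - T₂
        let B : ℝ := (R : ℝ) * T + (K : ℝ) * ((n : ℝ) + 1) ^ N
        (K : ℝ) * T₁ / B)
      atTop
      (nhds ((R : ℝ) * ((K : ℝ) - R - 1) / ((R : ℝ) * (R + 1) + K))) := by
  have hK0 : (0:ℝ) < K := by exact_mod_cast (by omega : 0 < K)
  have hR0 : (0:ℝ) ≤ R := by positivity
  have hRK : (0:ℝ) < (R:ℝ) + K := by positivity
  set T : ℕ → ℝ := fun n => R * (n : ℝ) ^ N + ((n : ℝ) + 1) ^ N with hT
  set B : ℕ → ℝ := fun n => (R : ℝ) * T n + (K : ℝ) * ((n : ℝ) + 1) ^ N with hB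
  set T₂ : ℕ → ℝ := fun n => ((⌈B n / (K : ℝ)⌉ : ℤ) : ℝ) with hT₂
  have hp1 : ∀ n : ℕ, (0:ℝ) < ((n:ℝ) + 1) ^ N := by
    intro n; positivity
  have hTN : ∀ n : ℕ, (0:ℝ) ≤ T n := by
    intro n; simp only [hT]; positivity
  have hBpos : ∀ n : ℕ, 0 < B n := by
    intro n
    have := hTN n; have := hp1 n
    simp only [hB]; nlinarith
  -- the rational part
  set x : ℕ → ℝ := fun n => ((n:ℝ) / ((n:ℝ) + 1)) ^ N with hx
  have hxnn : ∀ n : ℕ, 0 ≤ x n := by intro n; simp only [hx]; positivity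
  have hx1 : Tendsto x atTop (nhds 1) := by
    have : Tendsto (fun n : ℕ => (n:ℝ) / ((n:ℝ) + 1)) atTop (nhds 1) :=
      tendsto_natCast_div_add_atTop (1:ℝ)
    simpa using this.pow N
  set a : ℝ := (R:ℝ) * ((K:ℝ) - R) with ha
  set c : ℝ := (R:ℝ) ^ 2 with hc
  have hden : ∀ n : ℕ, 0 < c * x n + ((R:ℝ) + K) := by
    intro n
    have := hxnn n
    have : 0 ≤ c * x n := by positivity
    linarith
  have hmain : Tendsto (fun n : ℕ => (a * x n - R) / (c * x n + ((R:ℝ) + K))) atTop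
      (nhds ((R : ℝ) * ((K : ℝ) - R - 1) / ((R : ℝ) * (R + 1) + K))) := by
    have h1 : Tendsto (fun n : ℕ => a * x n - R) atTop (nhds (a * 1 - R)) :=
      (hx1.const_mul a).sub tendsto_const_nhds
    have h2 : Tendsto (fun n : ℕ => c * x n + ((R:ℝ) + K)) atTop (nhds (c * 1 + ((R:ℝ) + K))) :=
      (hx1.const_mul c).add tendsto_const_nhds
    have hne : c * 1 + ((R:ℝ) + K) ≠ 0 := by
      have : (0:ℝ) ≤ c := by positivity
      nlinarith
    have := h1.div h2 hne
    convert this using 2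
    case e'_3 => rfl
    rw [ha, hc]
    rw [div_eq_div_iff (by nlinarith [sq_nonneg (R:ℝ)]) (by nlinarith [sq_nonneg (R:ℝ)])]
    ring
  -- eventual equality of (K*T - B)/B with the rational expression
  have hmain' : Tendsto (fun n : ℕ => ((K:ℝ) * T n - B n) / B n) atTop
      (nhds ((R : ℝ) * ((K : ℝ) - R - 1) / ((R : ℝ) * (R + 1) + K))) := by
    refine hmain.congr' ?_
    filter_upwards [eventually_ge_atTop 1] with n hn
    have hne1 : ((n:ℝ) + 1) ^ N ≠ 0 := ne_of_gt (hp1 n)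
    have hBne : B n ≠ 0 := ne_of_gt (hBpos n)
    have hdn : c * x n + ((R:ℝ) + K) ≠ 0 := ne_of_gt (hden n)
    have hxeq : x n = (n:ℝ) ^ N / ((n:ℝ) + 1) ^ N := by
      simp only [hx, div_pow]
    rw [hxeq] at hdn ⊢
    rw [div_eq_div_iff hdn hBne]
    simp only [hB, hT, ha, hc]
    field_simp
    ring
  -- error term tends to zero
  have herr : Tendsto (fun n : ℕ => ((K:ℝ) * T₂ n - B n) / B n) atTop (nhds 0) := by
    have hub : ∀ n : ℕ, ((K:ℝ) * T₂ n - B n) / B n ≤ (K:ℝ) / B n := by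
      intro n
      have h1 : (⌈B n / (K:ℝ)⌉ : ℝ) < B n / K + 1 := Int.ceil_lt_add_one _
      have h2 : (K:ℝ) * T₂ n < B n + K := by
        have := mul_lt_mul_of_pos_left h1 hK0
        simp only [hT₂]
        rw [mul_add, mul_one, mul_div_cancel₀ _ (ne_of_gt hK0)] at this
        linarith
      exact (div_le_div_iff_of_pos_right (hBpos n)).mpr (by linarith)
    have hlb : ∀ n : ℕ, 0 ≤ ((K:ℝ) * T₂ n - B n) / B n := by
      intro n
      have h1 : B n / K ≤ (⌈B n / (K:ℝ)⌉ : ℝ) := Int.le_ceil _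
      have h2 : B n ≤ (K:ℝ) * T₂ n := by
        have := mul_le_mul_of_nonneg_left h1 (le_of_lt hK0)
        rw [mul_div_cancel₀ _ (ne_of_gt hK0)] at this
        simpa [hT₂] using this
      exact div_nonneg (by linarith) (le_of_lt (hBpos n))
    have hKB : Tendsto (fun n : ℕ => (K:ℝ) / B n) atTop (nhds 0) := by
      apply squeeze_zero' (Eventually.of_forall fun n => by positivity)
        (g := fun n : ℕ => 1 / ((n:ℝ) + 1))
      · filter_upwards [eventually_ge_atTop 0] with n _
        have hBge : (K:ℝ) * ((n:ℝ) + 1) ≤ B n := by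
          have h1 : (n:ℝ) + 1 ≤ ((n:ℝ) + 1) ^ N := by
            have : ((n:ℝ) + 1) ^ 1 ≤ ((n:ℝ) + 1) ^ N :=
              pow_le_pow_right₀ (by have : (0:ℝ) ≤ (n:ℝ) := Nat.cast_nonneg n; linarith) hN
            simpa using this
          have h2 : (0:ℝ) ≤ (R:ℝ) * T n := mul_nonneg hR0 (hTN n)
          have : (K:ℝ) * ((n:ℝ) + 1) ≤ (K:ℝ) * ((n:ℝ) + 1) ^ N :=
            mul_le_mul_of_nonneg_left h1 (le_of_lt hK0)
          simp only [hB]; linarith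
        rw [div_le_div_iff₀ (hBpos n) (by positivity)]
        nlinarith [hBpos n]
      · exact tendsto_one_div_add_atTop_nhds_zero_nat
    exact squeeze_zero hlb hub hKB
  have key := hmain'.sub herr
  rw [sub_zero] at key
  refine key.congr fun n => ?_
  simp only []
  have hBne : B n ≠ 0 := ne_of_gt (hBpos n)
  have : ((K:ℝ) * T n - B n) / B n - ((K:ℝ) * T₂ n - B n) / B n
      = (K:ℝ) * (T n - T₂ n) / B n := by
    field_simp
    ring
  rw [this]
end
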